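/- Let Γ be the random bipartite graph, let G be a closed subgroup with Aut(Γ)* ≤ G ≤ S_{l,r}(Γ), and let X be the largest subset of {l,r} such that S_X(Γ)* ⊆ G. Then there exists a finite bipartite subgraph H of Γ with the following property: for any i ∈ {l,r}, if there exist a vertex v ∈ H ∩ R_i and g ∈ G such that g↾H is a switch with respect to v, then i ∈ X. -/

import Mathlib

/-! Preamble: bipartite graphs, the random bipartite graph, side-preserving
permutation groups, switches, switch groups, and related notions. -/

/-- A bipartite graph on a vertex type `V`: the sides `left` and `right`
partition `V`, both sides are nonempty, and `adj` (the relation `P₁`) only holds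
from `left` to `right`.  The relation `P₂` is the complement of `adj` on
`left × right`. -/
structure BipartiteGraph (V : Type*) where
  left : Set V
  right : Set V
  adj : V → V → Prop
  left_nonempty : left.Nonempty
  right_nonempty : right.Nonempty
  union_eq : left ∪ right = Set.univ
  disjoint_sides : Disjoint left right
  adj_dom : ∀ a b, adj a b → a ∈ left ∧ b ∈ right

/-- The two sides of a bipartite graph. -/
inductive BSide : Type
  | l : BSide
  | r : BSide
deriving DecidableEq

namespace BipartiteGraph

variable {V : Type*} (Γ : BipartiteGraph V)

/-- The side of the graph indexed by an element of `BSide`. -/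
def side : BSide → Set V
  | BSide.l => Γ.left
  | BSide.r => Γ.right

/-- `Γ` is (isomorphic to) the random bipartite graph: it is countable, both
sides are infinite, and it satisfies the extension properties `Θₙ` for all `n`. -/
structure IsRandom : Prop where
  countable : Countable V
  left_infinite : Γ.left.Infinite
  right_infinite : Γ.right.Infinite
  ext_left : ∀ X₁ X₂ : Finset V, ↑X₁ ⊆ Γ.left → ↑X₂ ⊆ Γ.left → Disjoint X₁ X₂ →
      ∃ v ∈ Γ.right, (∀ x ∈ X₁, Γ.adj x v) ∧ (∀ x ∈ X₂, ¬ Γ.adj x v)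
  ext_right : ∀ X₁ X₂ : Finset V, ↑X₁ ⊆ Γ.right → ↑X₂ ⊆ Γ.right → Disjoint X₁ X₂ →
      ∃ v ∈ Γ.left, (∀ x ∈ X₁, Γ.adj v x) ∧ (∀ x ∈ X₂, ¬ Γ.adj v x)

/-- `Sym_{l,r}(Γ)`: the group of permutations of `V` preserving both sides. -/
def symLR : Subgroup (Equiv.Perm V) where
  carrier := {g | (∀ v, g v ∈ Γ.left ↔ v ∈ Γ.left) ∧ (∀ v, g v ∈ Γ.right ↔ v ∈ Γ.right)}
  one_mem' := ⟨fun _ => Iff.rfl, fun _ => Iff.rfl⟩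
  mul_mem' := by
    rintro a b ⟨hal, har⟩ ⟨hbl, hbr⟩
    exact ⟨fun v => (hal (b v)).trans (hbl v), fun v => (har (b v)).trans (hbr v)⟩
  inv_mem' := by
    rintro a ⟨hal, har⟩
    refine ⟨fun v => ?_, fun v => ?_⟩
    · have h := hal (a⁻¹ v); rw [← Equiv.Perm.mul_apply, mul_inv_cancel, Equiv.Perm.one_apply] at h; exact h.symm
    · have h := har (a⁻¹ v); rw [← Equiv.Perm.mul_apply, mul_inv_cancel, Equiv.Perm.one_apply] at h; exact h.symm

/-- The automorphism group of `Γ`: side-preserving permutations preserving `adj`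
(and hence both cross-types). -/
def autGroup : Subgroup (Equiv.Perm V) where
  carrier := {g | g ∈ Γ.symLR ∧ ∀ a b, Γ.adj a b ↔ Γ.adj (g a) (g b)}
  one_mem' := ⟨Γ.symLR.one_mem, fun _ _ => Iff.rfl⟩
  mul_mem' := by
    rintro a b ⟨ha, ha2⟩ ⟨hb, hb2⟩
    exact ⟨mul_mem ha hb, fun x y => (hb2 x y).trans (ha2 (b x) (b y))⟩
  inv_mem' := by
    rintro a ⟨ha, ha2⟩
    refine ⟨inv_mem ha, fun x y => ?_⟩
    have h := ha2 (a⁻¹ x) (a⁻¹ y)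
    rw [← Equiv.Perm.mul_apply, ← Equiv.Perm.mul_apply, mul_inv_cancel,
      Equiv.Perm.one_apply, Equiv.Perm.one_apply] at h
    exact h.symm

/-- A permutation `g` is a switch with respect to a set `A` if it preserves the
sides and, for every cross-edge `(a, b)`, the cross-type of `(a, b)` is preserved
if and only if `|{a, b} ∩ A| ≠ 1`. -/
def IsSwitch (g : Equiv.Perm V) (A : Set V) : Prop :=
  g ∈ Γ.symLR ∧ ∀ a ∈ Γ.left, ∀ b ∈ Γ.right,
    ((Γ.adj a b ↔ Γ.adj (g a) (g b)) ↔ ({a, b} ∩ A : Set V).ncard ≠ 1)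

/-- The restriction of a map `g` to a set `S` is a switch with respect to `A`:
the condition of `IsSwitch` holds for all cross-edges inside `S`. -/
def IsSwitchOn (g : V → V) (S : Set V) (A : Set V) : Prop :=
  ∀ a ∈ S ∩ Γ.left, ∀ b ∈ S ∩ Γ.right,
    ((Γ.adj a b ↔ Γ.adj (g a) (g b)) ↔ ({a, b} ∩ A : Set V).ncard ≠ 1)

/-- The restriction of a map `g` to a set `S` is an isomorphism: `g` preserves
the cross-type of every cross-edge inside `S`. -/
def IsIsoOn (g : V → V) (S : Set V) : Prop :=
  ∀ a ∈ S ∩ Γ.left, ∀ b ∈ S ∩ Γ.right, (Γ.adj a b ↔ Γ.adj (g a) (g b))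

end BipartiteGraph

/-- A subgroup of the full symmetric group is closed (in the topology of
pointwise convergence) iff it contains every permutation which agrees with some
member of the subgroup on each finite subset. -/
def IsClosedSubgroup {V : Type*} (G : Subgroup (Equiv.Perm V)) : Prop :=
  ∀ g : Equiv.Perm V, (∀ F : Finset V, ∃ h ∈ G, ∀ x ∈ F, h x = g x) → g ∈ G

/-- The closed subgroup generated by a set of permutations: the intersection of
all closed subgroups containing the set. -/
def closedClosure {V : Type*} (S : Set (Equiv.Perm V)) : Subgroup (Equiv.Perm V) :=
  sInf {G : Subgroup (Equiv.Perm V) | IsClosedSubgroup G ∧ S ⊆ ↑G}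

namespace BipartiteGraph

variable {V : Type*} (Γ : BipartiteGraph V)

/-- The switch group `S_X(Γ)`: the closed subgroup of `Sym_{l,r}(Γ)` generated
by `Aut(Γ)` together with all switches with respect to a single vertex `v ∈ R_i`
for `i ∈ X`. -/
def switchGroup (X : Set BSide) : Subgroup (Equiv.Perm V) :=
  closedClosure ((Γ.autGroup : Set (Equiv.Perm V)) ∪
    {g | ∃ i ∈ X, ∃ v ∈ Γ.side i, Γ.IsSwitch g {v}})

/-- The group `S_X(Γ)* `: the closed subgroup generated by `S_X(Γ)` together with
a switch `ρ` with respect to the whole side `R_l`. -/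
def switchGroupStar (X : Set BSide) : Subgroup (Equiv.Perm V) :=
  closedClosure ((Γ.switchGroup X : Set (Equiv.Perm V)) ∪ {g | Γ.IsSwitch g Γ.left})

/-- Membership in `Aut(Γ)*`, the group of side-preserving permutations which
either preserve all cross-types on `R_l × R_r` or exchange all cross-types on
`R_l × R_r`. -/
def InAutStar (g : Equiv.Perm V) : Prop :=
  g ∈ Γ.symLR ∧
    ((∀ a ∈ Γ.left, ∀ b ∈ Γ.right, (Γ.adj a b ↔ Γ.adj (g a) (g b))) ∨
     (∀ a ∈ Γ.left, ∀ b ∈ Γ.right, (Γ.adj a b ↔ ¬ Γ.adj (g a) (g b))))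

/-- The number of cross-edges of cross-type `P₁` inside the set `S`. -/
noncomputable def edgeCount (S : Set V) : ℕ :=
  {p : V × V | p.1 ∈ S ∧ p.2 ∈ S ∧ Γ.adj p.1 p.2}.ncard

/-- `g` preserves the parity of cross-types on `S`: the number of `P₁`
cross-edges in `S` is even iff the number of `P₁` cross-edges in `g[S]` is even. -/
def PreservesParityOn (g : V → V) (S : Set V) : Prop :=
  Even (Γ.edgeCount S) ↔ Even (Γ.edgeCount (g '' S))

/-- An `(m × n)`-subgraph of `Γ`: a finite set of vertices with `m` vertices on
the left side and `n` vertices on the right side. -/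
def IsMNSubgraph (S : Set V) (m n : ℕ) : Prop :=
  S.Finite ∧ (S ∩ Γ.left).ncard = m ∧ (S ∩ Γ.right).ncard = n

end BipartiteGraph


/-! ### Auxiliary lemmas for the proof of Lemma 5.4 -/

open Set

namespace BipartiteGraph

variable {V : Type*} (Γ : BipartiteGraph V)

lemma mem_right_iff (x : V) : x ∈ Γ.right ↔ x ∉ Γ.left := by
  constructor
  · intro hr hl
    exact (Γ.disjoint_sides.le_bot ⟨hl, hr⟩)
  · intro hl
    have : x ∈ Γ.left ∪ Γ.right := Γ.union_eq ▸ Set.mem_univ x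
    exact this.resolve_left hl

lemma left_ne_right {a b : V} (ha : a ∈ Γ.left) (hb : b ∈ Γ.right) : a ≠ b := by
  rintro rfl
  exact ((Γ.mem_right_iff a).1 hb) ha

lemma ncard_inter_singleton {a b v : V} (hab : a ≠ b) :
    (({a, b} ∩ {v} : Set V).ncard ≠ 1) ↔ (v ≠ a ∧ v ≠ b) := by
  by_cases h : v = a ∨ v = b
  · have : ({a, b} ∩ {v} : Set V) = {v} := by
      ext x
      simp only [Set.mem_inter_iff, Set.mem_insert_iff, Set.mem_singleton_iff]
      constructor
      · rintro ⟨_, rfl⟩; rfl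
      · rintro rfl; exact ⟨h, rfl⟩
    rw [this]
    simp only [Set.ncard_singleton, ne_eq, not_true_eq_false, false_iff]
    tauto
  · push_neg at h
    have : ({a, b} ∩ {v} : Set V) = ∅ := by
      ext x
      simp only [Set.mem_inter_iff, Set.mem_insert_iff, Set.mem_singleton_iff,
        Set.mem_empty_iff_false, iff_false, not_and]
      rintro hx rfl
      rcases hx with rfl | rfl
      · exact h.1 rfl
      · exact h.2 rfl
    rw [this]
    simp only [Set.ncard_empty]
    tauto

lemma symLR_mem_iff {g : Equiv.Perm V} :
    g ∈ Γ.symLR ↔ (∀ v, g v ∈ Γ.left ↔ v ∈ Γ.left) ∧ (∀ v, g v ∈ Γ.right ↔ v ∈ Γ.right) :=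
  Iff.rfl

lemma symLR_closed : IsClosedSubgroup Γ.symLR := by
  intro g hg
  constructor
  · intro v
    obtain ⟨h, hh, he⟩ := hg {v}
    rw [← he v (Finset.mem_singleton_self v)]
    exact hh.1 v
  · intro v
    obtain ⟨h, hh, he⟩ := hg {v}
    rw [← he v (Finset.mem_singleton_self v)]
    exact hh.2 v

end BipartiteGraph

lemma subset_closedClosure {V : Type*} (S : Set (Equiv.Perm V)) : S ⊆ ↑(closedClosure S) := by
  intro x hx
  rw [closedClosure, SetLike.mem_coe, Subgroup.mem_sInf]
  rintro G ⟨-, hS⟩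
  exact hS hx

lemma closedClosure_le {V : Type*} {S : Set (Equiv.Perm V)} {G : Subgroup (Equiv.Perm V)}
    (hG : IsClosedSubgroup G) (h : S ⊆ ↑G) : closedClosure S ≤ G :=
  sInf_le ⟨hG, h⟩

namespace BipartiteGraph

variable {V : Type*} (Γ : BipartiteGraph V)

lemma switchGroup_le_symLR (X : Set BSide) : Γ.switchGroup X ≤ Γ.symLR := by
  apply closedClosure_le Γ.symLR_closed
  rintro g (hg | hg)
  · exact hg.1
  · obtain ⟨i, -, v, -, hs⟩ := hg
    exact hs.1

lemma autGroup_le_symLR : Γ.autGroup ≤ Γ.symLR := fun g hg => hg.1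

lemma inAutStar_of_aut {g : Equiv.Perm V} (hg : g ∈ Γ.autGroup) : Γ.InAutStar g :=
  ⟨hg.1, Or.inl fun a _ b _ => hg.2 a b⟩

end BipartiteGraph

namespace BipartiteGraph

variable {V : Type*} {Γ : BipartiteGraph V}

/-- Extension with avoidance: infinitely many witnesses. -/
lemma ext_left' (hΓ : Γ.IsRandom) (Z : Finset V) :
    ∀ X₁ X₂ : Finset V, ↑X₁ ⊆ Γ.left → ↑X₂ ⊆ Γ.left → Disjoint X₁ X₂ →
    ∃ v ∈ Γ.right, v ∉ Z ∧ (∀ x ∈ X₁, Γ.adj x v) ∧ (∀ x ∈ X₂, ¬ Γ.adj x v) := by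
  classical
  induction Z using Finset.induction_on with
  | empty =>
    intro X₁ X₂ h1 h2 hd
    obtain ⟨v, hv, hp⟩ := hΓ.ext_left X₁ X₂ h1 h2 hd
    exact ⟨v, hv, by simp, hp.1, hp.2⟩
  | @insert z Z hz IH =>
    intro X₁ X₂ h1 h2 hd
    have hinf : (Γ.left \ ↑(X₁ ∪ X₂)).Infinite :=
      hΓ.left_infinite.diff (X₁ ∪ X₂).finite_toSet
    obtain ⟨ℓ, hℓ⟩ := hinf.nonempty
    have hℓl : ℓ ∈ Γ.left := hℓ.1
    have hℓ1 : ℓ ∉ X₁ := fun h => hℓ.2 (by simp [h])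
    have hℓ2 : ℓ ∉ X₂ := fun h => hℓ.2 (by simp [h])
    obtain ⟨v₁, hv₁r, hv₁Z, hv₁a, hv₁n⟩ := IH (insert ℓ X₁) X₂
      (by intro x hx; rcases Finset.mem_insert.1 (by exact_mod_cast hx) with rfl | hx'
          · exact hℓl
          · exact h1 hx')
      h2
      (by rw [Finset.disjoint_insert_left]; exact ⟨hℓ2, hd⟩)
    obtain ⟨v₂, hv₂r, hv₂Z, hv₂a, hv₂n⟩ := IH X₁ (insert ℓ X₂) h1
      (by intro x hx; rcases Finset.mem_insert.1 (by exact_mod_cast hx) with rfl | hx'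
          · exact hℓl
          · exact h2 hx')
      (by rw [Finset.disjoint_insert_right]; exact ⟨hℓ1, hd⟩)
    have hne : v₁ ≠ v₂ := by
      intro h
      exact hv₂n ℓ (Finset.mem_insert_self _ _) (h ▸ hv₁a ℓ (Finset.mem_insert_self _ _))
    by_cases hv₁z : v₁ = z
    · refine ⟨v₂, hv₂r, ?_, fun x hx => hv₂a x hx, fun x hx => hv₂n x (Finset.mem_insert_of_mem hx)⟩
      simp only [Finset.mem_insert, not_or]
      exact ⟨fun h => hne (hv₁z.trans h.symm), hv₂Z⟩
    · refine ⟨v₁, hv₁r, ?_, fun x hx => hv₁a x (Finset.mem_insert_of_mem hx), hv₁n⟩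
      simp only [Finset.mem_insert, not_or]
      exact ⟨hv₁z, hv₁Z⟩

lemma ext_right' (hΓ : Γ.IsRandom) (Z : Finset V) :
    ∀ X₁ X₂ : Finset V, ↑X₁ ⊆ Γ.right → ↑X₂ ⊆ Γ.right → Disjoint X₁ X₂ →
    ∃ v ∈ Γ.left, v ∉ Z ∧ (∀ x ∈ X₁, Γ.adj v x) ∧ (∀ x ∈ X₂, ¬ Γ.adj v x) := by
  classical
  induction Z using Finset.induction_on with
  | empty =>
    intro X₁ X₂ h1 h2 hd
    obtain ⟨v, hv, hp⟩ := hΓ.ext_right X₁ X₂ h1 h2 hd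
    exact ⟨v, hv, by simp, hp.1, hp.2⟩
  | @insert z Z hz IH =>
    intro X₁ X₂ h1 h2 hd
    have hinf : (Γ.right \ ↑(X₁ ∪ X₂)).Infinite :=
      hΓ.right_infinite.diff (X₁ ∪ X₂).finite_toSet
    obtain ⟨ℓ, hℓ⟩ := hinf.nonempty
    have hℓl : ℓ ∈ Γ.right := hℓ.1
    have hℓ1 : ℓ ∉ X₁ := fun h => hℓ.2 (by simp [h])
    have hℓ2 : ℓ ∉ X₂ := fun h => hℓ.2 (by simp [h])
    obtain ⟨v₁, hv₁r, hv₁Z, hv₁a, hv₁n⟩ := IH (insert ℓ X₁) X₂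
      (by intro x hx; rcases Finset.mem_insert.1 (by exact_mod_cast hx) with rfl | hx'
          · exact hℓl
          · exact h1 hx')
      h2
      (by rw [Finset.disjoint_insert_left]; exact ⟨hℓ2, hd⟩)
    obtain ⟨v₂, hv₂r, hv₂Z, hv₂a, hv₂n⟩ := IH X₁ (insert ℓ X₂) h1
      (by intro x hx; rcases Finset.mem_insert.1 (by exact_mod_cast hx) with rfl | hx'
          · exact hℓl
          · exact h2 hx')
      (by rw [Finset.disjoint_insert_right]; exact ⟨hℓ1, hd⟩)
    have hne : v₁ ≠ v₂ := by
      intro h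
      exact hv₂n ℓ (Finset.mem_insert_self _ _) (h ▸ hv₁a ℓ (Finset.mem_insert_self _ _))
    by_cases hv₁z : v₁ = z
    · refine ⟨v₂, hv₂r, ?_, fun x hx => hv₂a x hx, fun x hx => hv₂n x (Finset.mem_insert_of_mem hx)⟩
      simp only [Finset.mem_insert, not_or]
      exact ⟨fun h => hne (hv₁z.trans h.symm), hv₂Z⟩
    · refine ⟨v₁, hv₁r, ?_, fun x hx => hv₁a x (Finset.mem_insert_of_mem hx), hv₁n⟩
      simp only [Finset.mem_insert, not_or]
      exact ⟨hv₁z, hv₁Z⟩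

end BipartiteGraph

namespace BipartiteGraph

variable {V : Type*} {Γ : BipartiteGraph V}

/-- Simultaneously realize a family of patterns over a finite left set by
distinct right vertices. -/
lemma realize_right (hΓ : Γ.IsRandom) {κ : Type*} (s : Finset κ) (L : Finset V)
    (hL : ↑L ⊆ Γ.left) (q : κ → V → Prop) :
    ∃ f : κ → V, Set.InjOn f ↑s ∧ ∀ i ∈ s, f i ∈ Γ.right ∧
      ∀ x ∈ L, (Γ.adj x (f i) ↔ q i x) := by
  classical
  induction s using Finset.induction_on with
  | empty => exact ⟨fun _ => Classical.choice ⟨Γ.right_nonempty.choose⟩, by simp, by simp⟩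
  | @insert a s ha IH =>
    obtain ⟨f, hfi, hf⟩ := IH
    set X₁ : Finset V := L.filter (fun x => q a x) with hX₁
    set X₂ : Finset V := L.filter (fun x => ¬ q a x) with hX₂
    obtain ⟨v, hvr, hvZ, hva, hvn⟩ := ext_left' hΓ (s.image f) X₁ X₂
      (fun x hx => hL (Finset.mem_coe.2 (Finset.mem_of_mem_filter _ hx)))
      (fun x hx => hL (Finset.mem_coe.2 (Finset.mem_of_mem_filter _ hx)))
      (Finset.disjoint_filter_filter_not L L _)
    refine ⟨Function.update f a v, ?_, ?_⟩
    · intro x hx y hy hxy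
      simp only [Finset.coe_insert, Set.mem_insert_iff, Finset.mem_coe] at hx hy
      rcases hx with rfl | hx
      · rcases hy with rfl | hy
        · rfl
        · rw [Function.update_self, Function.update_of_ne (fun h : y = x => ha (h ▸ hy))] at hxy
          exact (hvZ (by rw [hxy]; exact Finset.mem_image_of_mem f hy)).elim
      · rcases hy with rfl | hy
        · rw [Function.update_self, Function.update_of_ne (fun h : x = y => ha (h ▸ hx))] at hxy
          exact (hvZ (by rw [← hxy]; exact Finset.mem_image_of_mem f hx)).elim
        · rw [Function.update_of_ne (fun h : x = a => ha (h ▸ hx)),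
            Function.update_of_ne (fun h : y = a => ha (h ▸ hy))] at hxy
          exact hfi (Finset.mem_coe.2 hx) (Finset.mem_coe.2 hy) hxy
    · intro i hi
      rcases Finset.mem_insert.1 hi with rfl | hi'
      · rw [Function.update_self]
        refine ⟨hvr, fun x hx => ?_⟩
        by_cases hq : q i x
        · simp only [hq, iff_true]
          exact hva x (Finset.mem_filter.2 ⟨hx, hq⟩)
        · simp only [hq, iff_false]
          exact hvn x (Finset.mem_filter.2 ⟨hx, hq⟩)
      · rw [Function.update_of_ne (fun h : i = a => ha (h ▸ hi'))]
        exact hf i hi'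

end BipartiteGraph

namespace BipartiteGraph

variable {V : Type*} (Γ : BipartiteGraph V)

/-- A finite partial isomorphism, coded as a finite set of pairs. -/
def Good (s : Finset (V × V)) : Prop :=
  (∀ p ∈ s, (p.1 ∈ Γ.left ↔ p.2 ∈ Γ.left)) ∧
  (∀ p ∈ s, ∀ q ∈ s, (p.1 = q.1 ↔ p.2 = q.2)) ∧
  (∀ p ∈ s, ∀ q ∈ s, p.1 ∈ Γ.left → q.1 ∈ Γ.right →
    (Γ.adj p.1 q.1 ↔ Γ.adj p.2 q.2))

variable {Γ} [DecidableEq V]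

lemma Good.side2 {s : Finset (V × V)} (hs : Γ.Good s) {p : V × V} (hp : p ∈ s) :
    p.1 ∈ Γ.right ↔ p.2 ∈ Γ.right := by
  rw [Γ.mem_right_iff, Γ.mem_right_iff, not_iff_not]
  exact hs.1 p hp

lemma Good.swap {s : Finset (V × V)} (hs : Γ.Good s) : Γ.Good (s.image Prod.swap) := by
  classical
  refine ⟨?_, ?_, ?_⟩
  · intro p hp
    obtain ⟨p', hp', rfl⟩ := Finset.mem_image.1 hp
    exact (hs.1 p' hp').symm
  · intro p hp q hq
    obtain ⟨p', hp', rfl⟩ := Finset.mem_image.1 hp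
    obtain ⟨q', hq', rfl⟩ := Finset.mem_image.1 hq
    exact (hs.2.1 p' hp' q' hq').symm
  · intro p hp q hq h1 h2
    obtain ⟨p', hp', rfl⟩ := Finset.mem_image.1 hp
    obtain ⟨q', hq', rfl⟩ := Finset.mem_image.1 hq
    exact (hs.2.2 p' hp' q' hq' ((hs.1 p' hp').2 h1) ((hs.side2 hq').2 h2)).symm

variable [DecidableEq V]

lemma good_forth (hΓ : Γ.IsRandom) {s : Finset (V × V)} (hs : Γ.Good s) (x : V) :
    ∃ y, Γ.Good (insert (x, y) s) := by
  classical
  by_cases hx : ∃ y, (x, y) ∈ s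
  · obtain ⟨y, hy⟩ := hx
    exact ⟨y, by rwa [Finset.insert_eq_self.2 hy]⟩
  push_neg at hx
  by_cases hxl : x ∈ Γ.left
  · -- partner is a left vertex realizing the pattern of x over right-side pairs
    set T := s.filter (fun p => p.1 ∈ Γ.right) with hT
    set X₁ := (T.filter (fun p => Γ.adj x p.1)).image Prod.snd with hX₁
    set X₂ := (T.filter (fun p => ¬ Γ.adj x p.1)).image Prod.snd with hX₂
    have hX₁r : ↑X₁ ⊆ Γ.right := by
      intro b hb
      obtain ⟨q, hq, rfl⟩ := Finset.mem_image.1 (by exact_mod_cast hb)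
      have hq' := Finset.mem_filter.1 (Finset.mem_filter.1 hq).1
      exact (hs.side2 hq'.1).1 hq'.2
    have hX₂r : ↑X₂ ⊆ Γ.right := by
      intro b hb
      obtain ⟨q, hq, rfl⟩ := Finset.mem_image.1 (by exact_mod_cast hb)
      have hq' := Finset.mem_filter.1 (Finset.mem_filter.1 hq).1
      exact (hs.side2 hq'.1).1 hq'.2
    have hdisj : Disjoint X₁ X₂ := by
      rw [Finset.disjoint_left]
      intro b hb1 hb2
      obtain ⟨q, hq, rfl⟩ := Finset.mem_image.1 hb1
      obtain ⟨q', hq', hqq⟩ := Finset.mem_image.1 hb2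
      have h1 := Finset.mem_filter.1 hq
      have h2 := Finset.mem_filter.1 hq'
      have hmem := (Finset.mem_filter.1 h1.1).1
      have hmem' := (Finset.mem_filter.1 h2.1).1
      have : q'.1 = q.1 := (hs.2.1 q' hmem' q hmem).2 hqq
      exact h2.2 (this ▸ h1.2)
    obtain ⟨y, hyl, hyZ, hya, hyn⟩ := ext_right' hΓ (s.image Prod.snd) X₁ X₂ hX₁r hX₂r hdisj
    refine ⟨y, ?_, ?_, ?_⟩
    · intro p hp
      rcases Finset.mem_insert.1 hp with rfl | hp'
      · simpa using iff_of_true hxl hyl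
      · exact hs.1 p hp'
    · intro p hp q hq
      rcases Finset.mem_insert.1 hp with rfl | hp' <;>
        rcases Finset.mem_insert.1 hq with rfl | hq'
      · simp
      · simp only
        constructor
        · intro h
          exact (hx q.2 (by rw [h]; simpa using hq')).elim
        · intro h
          exact (hyZ (by rw [h]; exact Finset.mem_image_of_mem Prod.snd hq')).elim
      · simp only
        constructor
        · intro h
          exact (hx p.2 (by rw [← h]; simpa using hp')).elim
        · intro h
          exact (hyZ (by rw [← h]; exact Finset.mem_image_of_mem Prod.snd hp')).elim
      · exact hs.2.1 p hp' q hq'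
    · intro p hp q hq h1 h2
      rcases Finset.mem_insert.1 hp with rfl | hp' <;>
        rcases Finset.mem_insert.1 hq with rfl | hq'
      · exact absurd hxl ((Γ.mem_right_iff x).1 h2)
      · simp only
        have hqT : q ∈ T := Finset.mem_filter.2 ⟨hq', h2⟩
        by_cases hadj : Γ.adj x q.1
        · exact iff_of_true hadj (hya q.2 (Finset.mem_image_of_mem _ (Finset.mem_filter.2 ⟨hqT, hadj⟩)))
        · exact iff_of_false hadj (hyn q.2 (Finset.mem_image_of_mem _ (Finset.mem_filter.2 ⟨hqT, hadj⟩)))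
      · exact absurd hxl ((Γ.mem_right_iff x).1 h2)
      · exact hs.2.2 p hp' q hq' h1 h2
  · -- x is on the right side
    have hxr : x ∈ Γ.right := (Γ.mem_right_iff x).2 hxl
    set T := s.filter (fun p => p.1 ∈ Γ.left) with hT
    set X₁ := (T.filter (fun p => Γ.adj p.1 x)).image Prod.snd with hX₁
    set X₂ := (T.filter (fun p => ¬ Γ.adj p.1 x)).image Prod.snd with hX₂
    have hX₁r : ↑X₁ ⊆ Γ.left := by
      intro b hb
      obtain ⟨q, hq, rfl⟩ := Finset.mem_image.1 (by exact_mod_cast hb)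
      have hq' := Finset.mem_filter.1 (Finset.mem_filter.1 hq).1
      exact (hs.1 _ hq'.1).1 hq'.2
    have hX₂r : ↑X₂ ⊆ Γ.left := by
      intro b hb
      obtain ⟨q, hq, rfl⟩ := Finset.mem_image.1 (by exact_mod_cast hb)
      have hq' := Finset.mem_filter.1 (Finset.mem_filter.1 hq).1
      exact (hs.1 _ hq'.1).1 hq'.2
    have hdisj : Disjoint X₁ X₂ := by
      rw [Finset.disjoint_left]
      intro b hb1 hb2
      obtain ⟨q, hq, rfl⟩ := Finset.mem_image.1 hb1
      obtain ⟨q', hq', hqq⟩ := Finset.mem_image.1 hb2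
      have h1 := Finset.mem_filter.1 hq
      have h2 := Finset.mem_filter.1 hq'
      have hmem := (Finset.mem_filter.1 h1.1).1
      have hmem' := (Finset.mem_filter.1 h2.1).1
      have : q'.1 = q.1 := (hs.2.1 q' hmem' q hmem).2 hqq
      exact h2.2 (this ▸ h1.2)
    obtain ⟨y, hyl, hyZ, hya, hyn⟩ := ext_left' hΓ (s.image Prod.snd) X₁ X₂ hX₁r hX₂r hdisj
    refine ⟨y, ?_, ?_, ?_⟩
    · intro p hp
      rcases Finset.mem_insert.1 hp with rfl | hp'
      · simpa using iff_of_false hxl (((Γ.mem_right_iff y).1 hyl))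
      · exact hs.1 p hp'
    · intro p hp q hq
      rcases Finset.mem_insert.1 hp with rfl | hp' <;>
        rcases Finset.mem_insert.1 hq with rfl | hq'
      · simp
      · simp only
        constructor
        · intro h
          exact (hx q.2 (by rw [h]; simpa using hq')).elim
        · intro h
          exact (hyZ (by rw [h]; exact Finset.mem_image_of_mem Prod.snd hq')).elim
      · simp only
        constructor
        · intro h
          exact (hx p.2 (by rw [← h]; simpa using hp')).elim
        · intro h
          exact (hyZ (by rw [← h]; exact Finset.mem_image_of_mem Prod.snd hp')).elim
      · exact hs.2.1 p hp' q hq'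
    · intro p hp q hq h1 h2
      rcases Finset.mem_insert.1 hp with rfl | hp' <;>
        rcases Finset.mem_insert.1 hq with rfl | hq'
      · exact absurd h1 hxl
      · exact absurd h1 hxl
      · simp only
        have hpT : p ∈ T := Finset.mem_filter.2 ⟨hp', h1⟩
        by_cases hadj : Γ.adj p.1 x
        · exact iff_of_true hadj (hya p.2 (Finset.mem_image_of_mem _ (Finset.mem_filter.2 ⟨hpT, hadj⟩)))
        · exact iff_of_false hadj (hyn p.2 (Finset.mem_image_of_mem _ (Finset.mem_filter.2 ⟨hpT, hadj⟩)))
      · exact hs.2.2 p hp' q hq' h1 h2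

lemma good_back (hΓ : Γ.IsRandom) {s : Finset (V × V)} (hs : Γ.Good s) (y : V) :
    ∃ x, Γ.Good (insert (x, y) s) := by
  classical
  obtain ⟨x, hx⟩ := good_forth hΓ hs.swap y
  refine ⟨x, ?_⟩
  have h2 : ((insert (y, x) (s.image Prod.swap)).image Prod.swap) = insert (x, y) s := by
    rw [Finset.image_insert, Finset.image_image]
    simp [Function.comp, Prod.swap_swap]
  exact h2 ▸ hx.swap

end BipartiteGraph

namespace BipartiteGraph

variable {V : Type*} {Γ : BipartiteGraph V}

/-- Homogeneity: every finite partial isomorphism extends to an automorphism. -/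
lemma extend_partialIso (hΓ : Γ.IsRandom) (D : Set V) (hD : D.Finite) (p : V → V)
    (hside : ∀ x ∈ D, (x ∈ Γ.left ↔ p x ∈ Γ.left))
    (hinj : D.InjOn p)
    (hiso : ∀ a ∈ D, ∀ b ∈ D, a ∈ Γ.left → b ∈ Γ.right →
      (Γ.adj a b ↔ Γ.adj (p a) (p b))) :
    ∃ σ : Equiv.Perm V, σ ∈ Γ.autGroup ∧ ∀ x ∈ D, σ x = p x := by
  classical
  have hne : Nonempty V := ⟨Γ.left_nonempty.choose⟩
  have hc : Countable V := hΓ.countable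
  obtain ⟨e, he⟩ := exists_surjective_nat V
  set s₀ : Finset (V × V) := hD.toFinset.image (fun x => (x, p x)) with hs₀def
  have hmem₀ : ∀ q ∈ s₀, q.1 ∈ D ∧ p q.1 = q.2 := by
    intro q hq
    obtain ⟨x, hx, rfl⟩ := Finset.mem_image.1 hq
    exact ⟨hD.mem_toFinset.1 hx, rfl⟩
  have hs₀ : Γ.Good s₀ := by
    refine ⟨?_, ?_, ?_⟩
    · intro q hq
      obtain ⟨hq1, hq2⟩ := hmem₀ q hq
      rw [← hq2]
      exact hside q.1 hq1
    · intro q hq q' hq'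
      obtain ⟨hq1, hq2⟩ := hmem₀ q hq
      obtain ⟨hq1', hq2'⟩ := hmem₀ q' hq'
      rw [← hq2, ← hq2']
      constructor
      · intro h; rw [h]
      · intro h; exact hinj hq1 hq1' h
    · intro q hq q' hq' h1 h2
      obtain ⟨hq1, hq2⟩ := hmem₀ q hq
      obtain ⟨hq1', hq2'⟩ := hmem₀ q' hq'
      rw [← hq2, ← hq2']
      exact hiso q.1 hq1 q'.1 hq1' h1 h2
  have step : ∀ s : Finset (V × V), Γ.Good s → ∀ n : ℕ, ∃ t : Finset (V × V),
      s ⊆ t ∧ Γ.Good t ∧ (∃ b, (e n, b) ∈ t) ∧ (∃ a, (a, e n) ∈ t) := by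
    intro s hs n
    obtain ⟨y, hy⟩ := good_forth hΓ hs (e n)
    obtain ⟨x, hx⟩ := good_back hΓ hy (e n)
    refine ⟨insert (x, e n) (insert (e n, y) s), ?_, hx, ?_, ?_⟩
    · exact fun q hq => Finset.mem_insert_of_mem (Finset.mem_insert_of_mem hq)
    · exact ⟨y, Finset.mem_insert_of_mem (Finset.mem_insert_self _ _)⟩
    · exact ⟨x, Finset.mem_insert_self _ _⟩
  set Sq : ℕ → {s : Finset (V × V) // Γ.Good s} :=
    fun n => Nat.rec ⟨s₀, hs₀⟩
      (fun n sp => ⟨(step sp.1 sp.2 n).choose, (step sp.1 sp.2 n).choose_spec.2.1⟩) n with hSq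
  set S : ℕ → Finset (V × V) := fun n => (Sq n).1 with hS
  have hSgood : ∀ n, Γ.Good (S n) := fun n => (Sq n).2
  have hSsucc : ∀ n, S (n + 1) = (step (S n) (hSgood n) n).choose := fun n => rfl
  have hS0 : S 0 = s₀ := rfl
  have hmono : ∀ m n, m ≤ n → S m ⊆ S n := by
    intro m n h
    induction h with
    | refl => exact Finset.Subset.refl _
    | @step k hk ih =>
        exact ih.trans (by rw [hSsucc k]; exact (step (S k) (hSgood k) k).choose_spec.1)
  have hcompat : ∀ {m n : ℕ} {q q' : V × V}, q ∈ S m → q' ∈ S n → (q.1 = q'.1 ↔ q.2 = q'.2) := by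
    intro m n q q' hq hq'
    exact (hSgood (max m n)).2.1 q (hmono m _ (le_max_left m n) hq)
      q' (hmono n _ (le_max_right m n) hq')
  have htotal : ∀ x : V, ∃ y, ∃ n, (x, y) ∈ S n := by
    intro x
    obtain ⟨n, rfl⟩ := he x
    obtain ⟨b, hb⟩ := (step (S n) (hSgood n) n).choose_spec.2.2.1
    exact ⟨b, n + 1, by rw [hSsucc]; exact hb⟩
  set f : V → V := fun x => (htotal x).choose with hf
  have hfx : ∀ x, ∃ n, (x, f x) ∈ S n := fun x => (htotal x).choose_spec
  have hfval : ∀ x y n, (x, y) ∈ S n → f x = y := by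
    intro x y n hxy
    obtain ⟨m, hm⟩ := hfx x
    exact (hcompat hm hxy).1 rfl
  have hinjf : Function.Injective f := by
    intro a b hab
    obtain ⟨m, hm⟩ := hfx a
    obtain ⟨n, hn⟩ := hfx b
    exact (hcompat hm hn).2 hab
  have hsurjf : Function.Surjective f := by
    intro y
    obtain ⟨n, rfl⟩ := he y
    obtain ⟨a, ha⟩ := (step (S n) (hSgood n) n).choose_spec.2.2.2
    exact ⟨a, hfval a (e n) (n + 1) (by rw [hSsucc]; exact ha)⟩
  have hsidel : ∀ v, v ∈ Γ.left ↔ f v ∈ Γ.left := by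
    intro v
    obtain ⟨n, hn⟩ := hfx v
    exact (hSgood n).1 _ hn
  have hsider : ∀ v, v ∈ Γ.right ↔ f v ∈ Γ.right := by
    intro v
    rw [Γ.mem_right_iff, Γ.mem_right_iff, not_iff_not]
    exact hsidel v
  have hadj : ∀ a b, Γ.adj a b ↔ Γ.adj (f a) (f b) := by
    intro a b
    by_cases ha : a ∈ Γ.left
    · by_cases hb : b ∈ Γ.right
      · obtain ⟨m, hm⟩ := hfx a
        obtain ⟨n, hn⟩ := hfx b
        exact (hSgood (max m n)).2.2 _ (hmono m _ (le_max_left m n) hm)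
          _ (hmono n _ (le_max_right m n) hn) ha hb
      · constructor
        · intro h; exact absurd (Γ.adj_dom a b h).2 hb
        · intro h
          exact absurd ((hsider b).2 (Γ.adj_dom _ _ h).2) hb
    · constructor
      · intro h; exact absurd (Γ.adj_dom a b h).1 ha
      · intro h
        exact absurd ((hsidel a).2 (Γ.adj_dom _ _ h).1) ha
  refine ⟨Equiv.ofBijective f ⟨hinjf, hsurjf⟩, ⟨⟨fun v => (hsidel v).symm, fun v => (hsider v).symm⟩, hadj⟩, ?_⟩
  intro x hx
  have : (x, p x) ∈ S 0 := by
    rw [hS0]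
    exact Finset.mem_image_of_mem _ (hD.mem_toFinset.2 hx)
  exact hfval x (p x) 0 this

end BipartiteGraph

lemma iff_of_notiff {A B C : Prop} (h1 : ¬(A ↔ B)) (h2 : ¬(A ↔ C)) : B ↔ C := by tauto

namespace BipartiteGraph

variable {V : Type*} {Γ : BipartiteGraph V}

set_option maxHeartbeats 4000000 in
/-- If switches at `v₀` are approximable in `G` over every finite set, then every
switch with respect to a single vertex on the same side lies in `G`. -/
lemma switch_mem_of_Q (hΓ : Γ.IsRandom) (G : Subgroup (Equiv.Perm V))
    (hG : IsClosedSubgroup G) (hAut : ∀ g : Equiv.Perm V, Γ.InAutStar g → g ∈ G)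
    (hle : G ≤ Γ.switchGroup {BSide.l, BSide.r}) {i : BSide} {v₀ : V}
    (hv₀ : v₀ ∈ Γ.side i)
    (hQ : ∀ F : Finset V, ∃ g ∈ G, Γ.IsSwitchOn (⇑g) (↑F ∪ {v₀}) {v₀})
    {g : Equiv.Perm V} {u : V} (hu : u ∈ Γ.side i) (hsw : Γ.IsSwitch g {u}) :
    g ∈ G := by
  classical
  apply hG
  intro F
  set F' : Finset V := insert u F with hF'
  -- δ : an automorphism sending u to v₀
  have hside_uv : u ∈ Γ.left ↔ v₀ ∈ Γ.left := by
    cases i with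
    | l => exact iff_of_true hu hv₀
    | r => exact iff_of_false ((Γ.mem_right_iff u).1 hu) ((Γ.mem_right_iff v₀).1 hv₀)
  obtain ⟨δ, hδaut, hδu⟩ := extend_partialIso hΓ {u} (Set.finite_singleton u)
    (fun _ => v₀)
    (by rintro x rfl; exact hside_uv)
    (Set.injOn_singleton _ _)
    (by
      intro a ha b hb hal hbr
      rw [show a = u from ha] at hal
      rw [show b = u from hb] at hbr
      exact absurd hal ((Γ.mem_right_iff u).1 hbr))
  have hδu' : δ u = v₀ := hδu u (Set.mem_singleton u)
  obtain ⟨g₁, hg₁G, hg₁sw⟩ := hQ (F'.image δ)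
  have hgsym : g ∈ Γ.symLR := hsw.1
  have hδsym : δ ∈ Γ.symLR := hδaut.1
  have hg₁sym : g₁ ∈ Γ.symLR := Γ.switchGroup_le_symLR _ (hle hg₁G)
  set ψ : Equiv.Perm V := g * δ⁻¹ * g₁⁻¹ with hψ
  have hψsym : ψ ∈ Γ.symLR := mul_mem (mul_mem hgsym (inv_mem hδsym)) (inv_mem hg₁sym)
  have hψval : ∀ x : V, ψ (g₁ (δ x)) = g x := by
    intro x
    simp [hψ, Equiv.Perm.mul_apply]
  set D₂ : Set V := (fun x => g₁ (δ x)) '' ↑F' with hD₂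
  have hD₂fin : D₂.Finite := (F'.finite_toSet).image _
  have hg₁δside : ∀ x : V, g₁ (δ x) ∈ Γ.left ↔ x ∈ Γ.left := by
    intro x
    rw [hg₁sym.1 (δ x), hδsym.1 x]
  obtain ⟨β, hβaut, hβ⟩ := extend_partialIso hΓ D₂ hD₂fin ψ
    (by
      rintro z ⟨x, hx, rfl⟩
      exact ((hψsym.1 (g₁ (δ x)))).symm)
    ((ψ.injective.injOn))
    (by
      rintro a' ⟨x, hx, rfl⟩ b' ⟨y, hy, rfl⟩ hal hbr
      have hxl : x ∈ Γ.left := (hg₁δside x).1 hal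
      have hyr : y ∈ Γ.right := by
        rw [Γ.mem_right_iff] at hbr ⊢
        intro hc
        exact hbr ((hg₁δside y).2 hc)
      have hxy : x ≠ y := Γ.left_ne_right hxl hyr
      have hδxy : δ x ≠ δ y := fun h => hxy (δ.injective h)
      have h1 := hg₁sw (δ x)
        ⟨Or.inl (Finset.mem_coe.2 (Finset.mem_image_of_mem δ hx)), (hδsym.1 x).2 hxl⟩
        (δ y)
        ⟨Or.inl (Finset.mem_coe.2 (Finset.mem_image_of_mem δ hy)), (hδsym.2 y).2 hyr⟩
      have h2 := hsw.2 x hxl y hyr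
      have h3 : Γ.adj (δ x) (δ y) ↔ Γ.adj x y := (hδaut.2 x y).symm
      have hnc1 : (({δ x, δ y} ∩ {v₀} : Set V).ncard ≠ 1) ↔ (v₀ ≠ δ x ∧ v₀ ≠ δ y) :=
        ncard_inter_singleton hδxy
      have hnc2 : (({x, y} ∩ {u} : Set V).ncard ≠ 1) ↔ (u ≠ x ∧ u ≠ y) :=
        ncard_inter_singleton hxy
      have he1 : v₀ = δ x ↔ u = x := by
        rw [← hδu']
        exact ⟨fun h => δ.injective h, fun h => by rw [h]⟩
      have he2 : v₀ = δ y ↔ u = y := by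
        rw [← hδu']
        exact ⟨fun h => δ.injective h, fun h => by rw [h]⟩
      have he1' : (v₀ ≠ δ x) ↔ (u ≠ x) := not_congr he1
      have he2' : (v₀ ≠ δ y) ↔ (u ≠ y) := not_congr he2
      rw [hnc1, he1', he2', ← hnc2, h3] at h1
      rw [hψval x, hψval y]
      by_cases hc : (({x, y} ∩ {u} : Set V).ncard ≠ 1)
      · exact (h1.2 hc).symm.trans (h2.2 hc)
      · exact iff_of_notiff (fun h => hc (h1.1 h)) (fun h => hc (h2.1 h)))
  refine ⟨β * g₁ * δ, ?_, ?_⟩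
  · exact mul_mem (mul_mem (hAut β (Γ.inAutStar_of_aut hβaut)) hg₁G)
      (hAut δ (Γ.inAutStar_of_aut hδaut))
  · intro x hx
    have hx' : x ∈ (↑F' : Set V) := by
      rw [hF']
      exact Finset.mem_coe.2 (Finset.mem_insert_of_mem hx)
    calc (β * g₁ * δ) x = β (g₁ (δ x)) := rfl
      _ = ψ (g₁ (δ x)) := hβ _ ⟨x, hx', rfl⟩
      _ = g x := hψval x

end BipartiteGraph

namespace BipartiteGraph

/-- Handles for the vertices of the rich finite subgraph: two copies (indexed by
`Bool`) of each template, plus a padding vertex. -/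
abbrev Hnd (V : Type*) := (Bool × V) ⊕ ((Bool × V) ⊕ Unit)

variable {V : Type*} (Γ : BipartiteGraph V)

/-- The adjacency specification between a right handle and a left handle. -/
def SpecH (vl vr : V) : Hnd V → Hnd V → Prop
  | Sum.inl (j, y), Sum.inl (j', x) => if j' = j then Γ.adj x y else Γ.adj vl y
  | Sum.inl (j, y), Sum.inr (Sum.inl (k, x)) => if k = j then Γ.adj vl y else Γ.adj x vr
  | Sum.inl (j, y), Sum.inr (Sum.inr _) => j = true ∧ Γ.adj vl y
  | Sum.inr (Sum.inl _), Sum.inl _ => False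
  | Sum.inr (Sum.inl (j, y)), Sum.inr (Sum.inl (k, x)) => if k = j then Γ.adj x y else Γ.adj x vr
  | Sum.inr (Sum.inl _), Sum.inr (Sum.inr _) => False
  | Sum.inr (Sum.inr _), Sum.inl _ => False
  | Sum.inr (Sum.inr _), Sum.inr (Sum.inl (k, x)) => k = true ∧ Γ.adj x vr
  | Sum.inr (Sum.inr _), Sum.inr (Sum.inr _) => False

/-- The template index assigned to a left handle. -/
def tmpL : Hnd V → Bool
  | Sum.inl (j, _) => !j
  | Sum.inr (Sum.inl (k, _)) => k
  | Sum.inr (Sum.inr _) => true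

/-- The template index assigned to a right handle. -/
def tmpR : Hnd V → Bool
  | Sum.inl (j, _) => !j
  | Sum.inr (Sum.inl (j, _)) => !j
  | Sum.inr (Sum.inr _) => true

variable {Γ}

lemma specH_pivotL (vl vr : V) (t : Hnd V) (y : V) :
    Γ.SpecH vl vr (Sum.inl (tmpL t, y)) t ↔ Γ.adj vl y := by
  rcases t with ⟨j, x⟩ | ⟨⟨k, x⟩ | u⟩ <;> simp [SpecH, tmpL]

lemma specH_pivotR (vl vr : V) (t : Hnd V) (x : V) :
    Γ.SpecH vl vr t (Sum.inr (Sum.inl (tmpR t, x))) ↔ Γ.adj x vr := by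
  rcases t with ⟨j, y⟩ | ⟨⟨j, y⟩ | u⟩ <;> simp [SpecH, tmpR]

lemma specH_AA (vl vr : V) (j : Bool) (x y : V) :
    Γ.SpecH vl vr (Sum.inl (j, y)) (Sum.inl (j, x)) ↔ Γ.adj x y := by
  simp [SpecH]

lemma specH_BB (vl vr : V) (k : Bool) (x y : V) :
    Γ.SpecH vl vr (Sum.inr (Sum.inl (k, y))) (Sum.inr (Sum.inl (k, x))) ↔ Γ.adj x y := by
  simp [SpecH]

lemma ne_pivotL (t : Hnd V) (x : V) : (Sum.inl (tmpL t, x) : Hnd V) ≠ t := by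
  rcases t with ⟨j, y⟩ | ⟨⟨k, y⟩ | u⟩ <;> simp [tmpL]

lemma ne_pivotR (t : Hnd V) (x : V) : (Sum.inr (Sum.inl (tmpR t, x)) : Hnd V) ≠ t := by
  rcases t with ⟨j, y⟩ | ⟨⟨k, y⟩ | u⟩ <;> simp [tmpR]

omit Γ in
/-- Choose distinct elements of an infinite set, indexed by a finite set. -/
lemma choose_injOn {κ : Type*} (s : Finset κ) (T : Set V) (hT : T.Infinite) :
    ∃ f : κ → V, Set.InjOn f ↑s ∧ ∀ i ∈ s, f i ∈ T := by
  classical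
  induction s using Finset.induction_on with
  | empty => exact ⟨fun _ => hT.nonempty.choose, by simp, by simp⟩
  | @insert a s ha IH =>
    obtain ⟨f, hfi, hf⟩ := IH
    obtain ⟨t, ht⟩ := (hT.diff (s.image f).finite_toSet).nonempty
    refine ⟨Function.update f a t, ?_, ?_⟩
    · intro x hx y hy hxy
      simp only [Finset.coe_insert, Set.mem_insert_iff, Finset.mem_coe] at hx hy
      rcases hx with rfl | hx
      · rcases hy with rfl | hy
        · rfl
        · rw [Function.update_self, Function.update_of_ne (fun h : y = x => ha (h ▸ hy))] at hxy
          exact (ht.2 (by rw [hxy]; exact Finset.mem_coe.2 (Finset.mem_image_of_mem f hy))).elim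
      · rcases hy with rfl | hy
        · rw [Function.update_self, Function.update_of_ne (fun h : x = y => ha (h ▸ hx))] at hxy
          exact (ht.2 (by rw [← hxy]; exact Finset.mem_coe.2 (Finset.mem_image_of_mem f hx))).elim
        · rw [Function.update_of_ne (fun h : x = a => ha (h ▸ hx)),
            Function.update_of_ne (fun h : y = a => ha (h ▸ hy))] at hxy
          exact hfi (Finset.mem_coe.2 hx) (Finset.mem_coe.2 hy) hxy
    · intro i hi
      rcases Finset.mem_insert.1 hi with rfl | hi'
      · rw [Function.update_self]; exact ht.1
      · rw [Function.update_of_ne (fun h : i = a => ha (h ▸ hi'))]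
        exact hf i hi'

end BipartiteGraph

set_option maxHeartbeats 2000000 in
/-- **Lemma 5.4.** Let `G` be a closed subgroup with `Aut(Γ)* ≤ G ≤ S_{l,r}(Γ)`
and let `X` be the largest subset of `{l, r}` with `S_X(Γ)* ⊆ G`.  Then there is
a finite bipartite subgraph `H` of `Γ` such that for any `i ∈ {l, r}`: if some
`g ∈ G` restricts on `H` to a switch with respect to a vertex `v ∈ H ∩ R_i`,
then `i ∈ X`. -/
theorem exists_switch_detecting_subgraph {V : Type*} (Γ : BipartiteGraph V)
    (hΓ : Γ.IsRandom) (G : Subgroup (Equiv.Perm V)) (hG : IsClosedSubgroup G)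
    (hAut : ∀ g : Equiv.Perm V, Γ.InAutStar g → g ∈ G)
    (hle : G ≤ Γ.switchGroup {BSide.l, BSide.r})
    (X : Set BSide) (hX : Γ.switchGroupStar X ≤ G)
    (hXmax : ∀ Y : Set BSide, Γ.switchGroupStar Y ≤ G → Y ⊆ X) :
    ∃ H : Finset V, ((H : Set V) ∩ Γ.left).Nonempty ∧ ((H : Set V) ∩ Γ.right).Nonempty ∧
      ∀ i : BSide, (∃ v ∈ (H : Set V) ∩ Γ.side i, ∃ g ∈ G,
        Γ.IsSwitchOn (⇑g) (H : Set V) {v}) → i ∈ X := by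
  classical
  open BipartiteGraph in
  -- Step A : approximability of switches at a fixed pivot implies the side is in X
  have stepA : ∀ i : BSide,
      (∃ v₀ ∈ Γ.side i, ∀ F : Finset V, ∃ g ∈ G, Γ.IsSwitchOn (⇑g) (↑F ∪ {v₀}) {v₀}) →
      i ∈ X := by
    rintro i ⟨v₀, hv₀, hQ⟩
    have hswG : Γ.switchGroup (X ∪ {i}) ≤ G := by
      apply closedClosure_le hG
      rintro g' (hg' | hg')
      · exact hAut g' (Γ.inAutStar_of_aut hg')
      · obtain ⟨j, hj, v, hv, hsw⟩ := hg'
        rcases hj with hj | hj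
        · exact hX (subset_closedClosure _ (Or.inl
            (subset_closedClosure _ (Or.inr ⟨j, hj, v, hv, hsw⟩))))
        · rw [Set.mem_singleton_iff] at hj
          subst hj
          exact BipartiteGraph.switch_mem_of_Q hΓ G hG hAut hle hv₀ hQ hv hsw
    have hstar : Γ.switchGroupStar (X ∪ {i}) ≤ G := by
      apply closedClosure_le hG
      rintro g' (hg' | hg')
      · exact hswG hg'
      · apply hAut
        refine ⟨hg'.1, Or.inr ?_⟩
        intro a ha b hb
        have h := hg'.2 a ha b hb
        have hset : ({a, b} ∩ Γ.left : Set V) = {a} := by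
          ext x
          simp only [Set.mem_inter_iff, Set.mem_insert_iff, Set.mem_singleton_iff]
          constructor
          · rintro ⟨rfl | rfl, hxl⟩
            · rfl
            · exact absurd hxl ((Γ.mem_right_iff x).1 hb)
          · rintro rfl; exact ⟨Or.inl rfl, ha⟩
        have hone : ¬ (({a, b} ∩ Γ.left : Set V).ncard ≠ 1) := by
          rw [hset, Set.ncard_singleton]; simp
        have h2 : ¬(Γ.adj a b ↔ Γ.adj (g' a) (g' b)) := fun hc => hone (h.1 hc)
        constructor
        · intro hA hB; exact h2 (iff_of_true hA hB)
        · intro hB; by_contra hA; exact h2 (iff_of_false hA hB)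
    exact hXmax (X ∪ {i}) hstar (Set.mem_union_right _ rfl)
  -- Step B : for sides not in X, there are finite obstruction sets
  have stepB : ∀ i : BSide, i ∉ X → ∀ v₀ ∈ Γ.side i, ∃ F : Finset V,
      ∀ g ∈ G, ¬ Γ.IsSwitchOn (⇑g) (↑F ∪ {v₀}) {v₀} := by
    intro i hi v₀ hv₀
    by_contra hcon
    push_neg at hcon
    exact hi (stepA i ⟨v₀, hv₀, hcon⟩)
  obtain ⟨v_l, hv_l⟩ := Γ.left_nonempty
  obtain ⟨v_r, hv_r⟩ := Γ.right_nonempty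
  obtain ⟨F_l, hF_l⟩ : ∃ F : Finset V, BSide.l ∉ X →
      ∀ g ∈ G, ¬ Γ.IsSwitchOn (⇑g) (↑F ∪ {v_l}) {v_l} := by
    by_cases hlX : BSide.l ∈ X
    · exact ⟨∅, fun h => absurd hlX h⟩
    · obtain ⟨F, hF⟩ := stepB BSide.l hlX v_l hv_l
      exact ⟨F, fun _ => hF⟩
  obtain ⟨F_r, hF_r⟩ : ∃ F : Finset V, BSide.r ∉ X →
      ∀ g ∈ G, ¬ Γ.IsSwitchOn (⇑g) (↑F ∪ {v_r}) {v_r} := by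
    by_cases hrX : BSide.r ∈ X
    · exact ⟨∅, fun h => absurd hrX h⟩
    · obtain ⟨F, hF⟩ := stepB BSide.r hrX v_r hv_r
      exact ⟨F, fun _ => hF⟩
  -- the construction of the rich finite subgraph H
  set Fl' : Finset V := insert v_l F_l with hFl'def
  set Fr' : Finset V := insert v_r F_r with hFr'def
  set AL : Finset V := (Fl'.filter (· ∈ Γ.left)).erase v_l with hALdef
  set BL : Finset V := Fr'.filter (· ∈ Γ.left) with hBLdef
  set AR : Finset V := Fl'.filter (· ∈ Γ.right) with hARdef
  set BR : Finset V := (Fr'.filter (· ∈ Γ.right)).erase v_r with hBRdef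
  set sL : Finset (BipartiteGraph.Hnd V) :=
    (Finset.univ ×ˢ AL).disjSum ((Finset.univ ×ˢ BL).disjSum {()}) with hsLdef
  set sR : Finset (BipartiteGraph.Hnd V) :=
    (Finset.univ ×ˢ AR).disjSum ((Finset.univ ×ˢ BR).disjSum {()}) with hsRdef
  obtain ⟨vL, hvLinj, hvLmem⟩ := BipartiteGraph.choose_injOn sL Γ.left hΓ.left_infinite
  set LB : Finset V := sL.image vL with hLBdef
  have hLBleft : ↑LB ⊆ Γ.left := by
    intro x hx
    obtain ⟨t, ht, rfl⟩ := Finset.mem_image.1 (by exact_mod_cast hx)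
    exact hvLmem t ht
  obtain ⟨vR, hvRinj, hvRmem⟩ := BipartiteGraph.realize_right hΓ sR LB hLBleft
    (fun r x => ∃ t ∈ sL, vL t = x ∧ Γ.SpecH v_l v_r r t)
  set H : Finset V := LB ∪ sR.image vR with hHdef
  -- membership bookkeeping
  have hALmem : ∀ (j : Bool) (x : V), x ∈ AL → (Sum.inl (j, x) : BipartiteGraph.Hnd V) ∈ sL := by
    intro j x hx
    rw [hsLdef]
    exact Finset.inl_mem_disjSum.2 (Finset.mem_product.2 ⟨Finset.mem_univ j, hx⟩)
  have hBLmem : ∀ (k : Bool) (x : V), x ∈ BL →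
      (Sum.inr (Sum.inl (k, x)) : BipartiteGraph.Hnd V) ∈ sL := by
    intro k x hx
    rw [hsLdef]
    exact Finset.inr_mem_disjSum.2 (Finset.inl_mem_disjSum.2
      (Finset.mem_product.2 ⟨Finset.mem_univ k, hx⟩))
  have hPadL : (Sum.inr (Sum.inr ()) : BipartiteGraph.Hnd V) ∈ sL := by
    rw [hsLdef]
    exact Finset.inr_mem_disjSum.2 (Finset.inr_mem_disjSum.2 (Finset.mem_singleton_self ()))
  have hARmem : ∀ (j : Bool) (y : V), y ∈ AR → (Sum.inl (j, y) : BipartiteGraph.Hnd V) ∈ sR := by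
    intro j y hy
    rw [hsRdef]
    exact Finset.inl_mem_disjSum.2 (Finset.mem_product.2 ⟨Finset.mem_univ j, hy⟩)
  have hBRmem : ∀ (k : Bool) (y : V), y ∈ BR →
      (Sum.inr (Sum.inl (k, y)) : BipartiteGraph.Hnd V) ∈ sR := by
    intro k y hy
    rw [hsRdef]
    exact Finset.inr_mem_disjSum.2 (Finset.inl_mem_disjSum.2
      (Finset.mem_product.2 ⟨Finset.mem_univ k, hy⟩))
  have hPadR : (Sum.inr (Sum.inr ()) : BipartiteGraph.Hnd V) ∈ sR := by
    rw [hsRdef]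
    exact Finset.inr_mem_disjSum.2 (Finset.inr_mem_disjSum.2 (Finset.mem_singleton_self ()))
  have hmemR : ∀ r ∈ sR, vR r ∈ Γ.right := fun r hr => (hvRmem r hr).1
  have hq_eval : ∀ r ∈ sR, ∀ t ∈ sL, (Γ.adj (vL t) (vR r) ↔ Γ.SpecH v_l v_r r t) := by
    intro r hr t ht
    rw [(hvRmem r hr).2 (vL t) (Finset.mem_image_of_mem vL ht)]
    constructor
    · rintro ⟨t', ht', hval, hspec⟩
      rwa [hvLinj (Finset.mem_coe.2 ht') (Finset.mem_coe.2 ht) hval] at hspec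
    · intro h; exact ⟨t, ht, rfl, h⟩
  have hvLH : ∀ t ∈ sL, vL t ∈ H := by
    intro t ht
    rw [hHdef]
    exact Finset.mem_union_left _ (Finset.mem_image_of_mem vL ht)
  have hvRH : ∀ r ∈ sR, vR r ∈ H := by
    intro r hr
    rw [hHdef]
    exact Finset.mem_union_right _ (Finset.mem_image_of_mem vR hr)
  have hHleftchar : ∀ x ∈ (↑H : Set V), x ∈ Γ.left → ∃ t ∈ sL, vL t = x := by
    intro x hx hxl
    rcases Finset.mem_union.1 (Finset.mem_coe.1 hx) with hx' | hx'
    · obtain ⟨t, ht, rfl⟩ := Finset.mem_image.1 hx'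
      exact ⟨t, ht, rfl⟩
    · obtain ⟨r, hr, rfl⟩ := Finset.mem_image.1 hx'
      exact absurd hxl ((Γ.mem_right_iff _).1 (hmemR r hr))
  have hHrightchar : ∀ x ∈ (↑H : Set V), x ∈ Γ.right → ∃ r ∈ sR, vR r = x := by
    intro x hx hxr
    rcases Finset.mem_union.1 (Finset.mem_coe.1 hx) with hx' | hx'
    · obtain ⟨t, ht, rfl⟩ := Finset.mem_image.1 hx'
      exact absurd (hvLmem t ht) ((Γ.mem_right_iff _).1 hxr)
    · obtain ⟨r, hr, rfl⟩ := Finset.mem_image.1 hx'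
      exact ⟨r, hr, rfl⟩
  refine ⟨H, ⟨vL (Sum.inr (Sum.inr ())), Finset.mem_coe.2 (hvLH _ hPadL), hvLmem _ hPadL⟩,
    ⟨vR (Sum.inr (Sum.inr ())), Finset.mem_coe.2 (hvRH _ hPadR), hmemR _ hPadR⟩, ?_⟩
  rintro i ⟨w, hw, g, hgG, hsw⟩
  by_contra hiX
  cases i with
  | l =>
    have hwl : w ∈ Γ.left := hw.2
    obtain ⟨tL, htL, hvtL⟩ := hHleftchar w hw.1 hwl
    set j : Bool := BipartiteGraph.tmpL tL with hjdef
    set φ : V → V := fun x =>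
      if x = v_l then w
      else if x ∈ AL then vL (Sum.inl (j, x))
      else if x ∈ AR then vR (Sum.inl (j, x))
      else x with hφdef
    have hφv : φ v_l = w := by rw [hφdef]; simp
    have hφAL : ∀ x ∈ AL, φ x = vL (Sum.inl (j, x)) := by
      intro x hx
      have hxv : x ≠ v_l := Finset.ne_of_mem_erase (hALdef ▸ hx)
      rw [hφdef]
      simp only [if_neg hxv, if_pos hx]
    have hALleft : ∀ x ∈ AL, x ∈ Γ.left := by
      intro x hx
      exact (Finset.mem_filter.1 (Finset.mem_of_mem_erase (hALdef ▸ hx))).2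
    have hARright : ∀ x ∈ AR, x ∈ Γ.right := by
      intro x hx
      exact (Finset.mem_filter.1 (hARdef ▸ hx)).2
    have hφAR : ∀ x ∈ AR, φ x = vR (Sum.inl (j, x)) := by
      intro x hx
      have hxr : x ∈ Γ.right := hARright x hx
      have hxv : x ≠ v_l := fun h => (Γ.left_ne_right hv_l hxr) h.symm
      have hxAL : x ∉ AL := fun h => (Γ.left_ne_right (hALleft x h) hxr) rfl
      rw [hφdef]
      simp only [if_neg hxv, if_neg hxAL, if_pos hx]
    have hclass : ∀ x ∈ (↑Fl' : Set V), x = v_l ∨ x ∈ AL ∨ x ∈ AR := by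
      intro x hx
      by_cases hxv : x = v_l
      · exact Or.inl hxv
      · right
        by_cases hxl : x ∈ Γ.left
        · exact Or.inl (by
            rw [hALdef]
            exact Finset.mem_erase.2 ⟨hxv, Finset.mem_filter.2 ⟨Finset.mem_coe.1 hx, hxl⟩⟩)
        · exact Or.inr (by
            rw [hARdef]
            exact Finset.mem_filter.2 ⟨Finset.mem_coe.1 hx, (Γ.mem_right_iff x).2 hxl⟩)
    have hvlD : v_l ∈ (↑Fl' : Set V) := by
      rw [hFl'def]; exact Finset.mem_coe.2 (Finset.mem_insert_self _ _)
    have hφside : ∀ x ∈ (↑Fl' : Set V), (x ∈ Γ.left ↔ φ x ∈ Γ.left) := by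
      intro x hx
      rcases hclass x hx with hxeq | hx' | hx'
      · rw [hxeq, hφv]; exact iff_of_true hv_l hwl
      · rw [hφAL x hx']
        exact iff_of_true (hALleft x hx') (hvLmem _ (hALmem j x hx'))
      · rw [hφAR x hx']
        exact iff_of_false ((Γ.mem_right_iff x).1 (hARright x hx'))
          ((Γ.mem_right_iff _).1 (hmemR _ (hARmem j x hx')))
    have hφH : ∀ x ∈ (↑Fl' : Set V), φ x ∈ (↑H : Set V) := by
      intro x hx
      rcases hclass x hx with hxeq | hx' | hx'
      · rw [hxeq, hφv]; exact hw.1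
      · rw [hφAL x hx']; exact Finset.mem_coe.2 (hvLH _ (hALmem j x hx'))
      · rw [hφAR x hx']; exact Finset.mem_coe.2 (hvRH _ (hARmem j x hx'))
    have hφinj : Set.InjOn φ (↑Fl' : Set V) := by
      intro x hx y hy hxy
      rcases hclass x hx with hxeq | hx' | hx' <;> rcases hclass y hy with hyeq | hy' | hy'
      · rw [hxeq, hyeq]
      · rw [hxeq, hφv, hφAL y hy', ← hvtL] at hxy
        exact absurd (hvLinj (Finset.mem_coe.2 htL)
          (Finset.mem_coe.2 (hALmem j y hy')) hxy).symm (BipartiteGraph.ne_pivotL tL y)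
      · rw [hxeq, hφv, hφAR y hy'] at hxy
        exact absurd hxy (Γ.left_ne_right hwl (hmemR _ (hARmem j y hy')))
      · rw [hyeq, hφv, hφAL x hx', ← hvtL] at hxy
        exact absurd (hvLinj (Finset.mem_coe.2 (hALmem j x hx'))
          (Finset.mem_coe.2 htL) hxy) (BipartiteGraph.ne_pivotL tL x)
      · rw [hφAL x hx', hφAL y hy'] at hxy
        have := hvLinj (Finset.mem_coe.2 (hALmem j x hx'))
          (Finset.mem_coe.2 (hALmem j y hy')) hxy
        exact (Prod.mk.injEq _ _ _ _ ▸ Sum.inl.inj this).2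
      · rw [hφAL x hx', hφAR y hy'] at hxy
        exact absurd hxy (Γ.left_ne_right (hvLmem _ (hALmem j x hx'))
          (hmemR _ (hARmem j y hy')))
      · rw [hyeq, hφAR x hx', hφv] at hxy
        exact absurd hxy.symm (Γ.left_ne_right hwl (hmemR _ (hARmem j x hx')))
      · rw [hφAR x hx', hφAL y hy'] at hxy
        exact absurd hxy.symm (Γ.left_ne_right (hvLmem _ (hALmem j y hy'))
          (hmemR _ (hARmem j x hx')))
      · rw [hφAR x hx', hφAR y hy'] at hxy
        have := hvRinj (Finset.mem_coe.2 (hARmem j x hx'))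
          (Finset.mem_coe.2 (hARmem j y hy')) hxy
        exact (Prod.mk.injEq _ _ _ _ ▸ Sum.inl.inj this).2
    have hφiso : ∀ a ∈ (↑Fl' : Set V), ∀ b ∈ (↑Fl' : Set V), a ∈ Γ.left → b ∈ Γ.right →
        (Γ.adj a b ↔ Γ.adj (φ a) (φ b)) := by
      intro a ha b hb hal hbr
      have hbAR : b ∈ AR := by
        rcases hclass b hb with hbeq | hb' | hb'
        · rw [hbeq] at hbr
          exact absurd hv_l ((Γ.mem_right_iff v_l).1 hbr)
        · exact absurd rfl (Γ.left_ne_right (hALleft b hb') hbr)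
        · exact hb'
      rw [hφAR b hbAR]
      rcases hclass a ha with haeq | haAL | haAR
      · rw [haeq, hφv, ← hvtL, hq_eval _ (hARmem j b hbAR) tL htL, hjdef]
        exact (BipartiteGraph.specH_pivotL v_l v_r tL b).symm
      · rw [hφAL a haAL, hq_eval _ (hARmem j b hbAR) _ (hALmem j a haAL)]
        exact (BipartiteGraph.specH_AA v_l v_r j a b).symm
      · exact absurd hal ((Γ.mem_right_iff a).1 (hARright a haAR))
    obtain ⟨α, hαaut, hα⟩ := BipartiteGraph.extend_partialIso hΓ (↑Fl' : Set V)
      (Fl'.finite_toSet) φ hφside hφinj hφiso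
    apply hF_l hiX (g * α) (mul_mem hgG (hAut α (Γ.inAutStar_of_aut hαaut)))
    have hsetD : (↑F_l ∪ {v_l} : Set V) = (↑Fl' : Set V) := by
      rw [hFl'def]
      ext x
      simp [or_comm]
    intro a ha b hb
    rw [hsetD] at ha hb
    obtain ⟨haD, hal⟩ := ha
    obtain ⟨hbD, hbr⟩ := hb
    have e1 : (⇑(g * α)) a = g (φ a) := by rw [Equiv.Perm.mul_apply, hα a haD]
    have e2 : (⇑(g * α)) b = g (φ b) := by rw [Equiv.Perm.mul_apply, hα b hbD]
    rw [e1, e2]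
    have hφar : φ b ∈ Γ.right := by
      rw [Γ.mem_right_iff] at hbr ⊢
      intro hc
      exact hbr ((hφside b hbD).2 hc)
    have h1 := hsw (φ a) ⟨hφH a haD, (hφside a haD).1 hal⟩ (φ b) ⟨hφH b hbD, hφar⟩
    have h2 : Γ.adj a b ↔ Γ.adj (φ a) (φ b) := hφiso a haD b hbD hal hbr
    have hab : a ≠ b := Γ.left_ne_right hal hbr
    have hφab : φ a ≠ φ b := Γ.left_ne_right ((hφside a haD).1 hal) hφar
    have hn1 : ((({φ a, φ b} : Set V) ∩ {w}).ncard ≠ 1) ↔ (w ≠ φ a ∧ w ≠ φ b) :=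
      BipartiteGraph.ncard_inter_singleton hφab
    have hn2 : ((({a, b} : Set V) ∩ {v_l}).ncard ≠ 1) ↔ (v_l ≠ a ∧ v_l ≠ b) :=
      BipartiteGraph.ncard_inter_singleton hab
    have hwa : w = φ a ↔ v_l = a := by
      constructor
      · intro h
        exact hφinj hvlD haD (by rw [hφv, h])
      · rintro rfl; exact hφv.symm
    have hwb : w = φ b ↔ v_l = b := by
      constructor
      · intro h
        exact hφinj hvlD hbD (by rw [hφv, h])
      · rintro rfl
        exact absurd hv_l ((Γ.mem_right_iff v_l).1 hbr)
    rw [h2, h1, hn1, hn2]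
    exact and_congr (not_congr hwa) (not_congr hwb)
  | r =>
    have hwr : w ∈ Γ.right := hw.2
    obtain ⟨tR, htR, hvtR⟩ := hHrightchar w hw.1 hwr
    set k : Bool := BipartiteGraph.tmpR tR with hkdef
    set φ : V → V := fun x =>
      if x = v_r then w
      else if x ∈ BL then vL (Sum.inr (Sum.inl (k, x)))
      else if x ∈ BR then vR (Sum.inr (Sum.inl (k, x)))
      else x with hφdef
    have hφv : φ v_r = w := by rw [hφdef]; simp
    have hBLleft : ∀ x ∈ BL, x ∈ Γ.left := by
      intro x hx
      exact (Finset.mem_filter.1 (hBLdef ▸ hx)).2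
    have hBRright : ∀ x ∈ BR, x ∈ Γ.right := by
      intro x hx
      exact (Finset.mem_filter.1 (Finset.mem_of_mem_erase (hBRdef ▸ hx))).2
    have hφBL : ∀ x ∈ BL, φ x = vL (Sum.inr (Sum.inl (k, x))) := by
      intro x hx
      have hxv : x ≠ v_r := Γ.left_ne_right (hBLleft x hx) hv_r
      rw [hφdef]
      simp only [if_neg hxv, if_pos hx]
    have hφBR : ∀ x ∈ BR, φ x = vR (Sum.inr (Sum.inl (k, x))) := by
      intro x hx
      have hxv : x ≠ v_r := Finset.ne_of_mem_erase (hBRdef ▸ hx)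
      have hxBL : x ∉ BL := fun h => (Γ.left_ne_right (hBLleft x h) (hBRright x hx)) rfl
      rw [hφdef]
      simp only [if_neg hxv, if_neg hxBL, if_pos hx]
    have hclass : ∀ x ∈ (↑Fr' : Set V), x = v_r ∨ x ∈ BL ∨ x ∈ BR := by
      intro x hx
      by_cases hxv : x = v_r
      · exact Or.inl hxv
      · right
        by_cases hxl : x ∈ Γ.left
        · exact Or.inl (by
            rw [hBLdef]
            exact Finset.mem_filter.2 ⟨Finset.mem_coe.1 hx, hxl⟩)
        · exact Or.inr (by
            rw [hBRdef]
            exact Finset.mem_erase.2 ⟨hxv,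
              Finset.mem_filter.2 ⟨Finset.mem_coe.1 hx, (Γ.mem_right_iff x).2 hxl⟩⟩)
    have hvrD : v_r ∈ (↑Fr' : Set V) := by
      rw [hFr'def]; exact Finset.mem_coe.2 (Finset.mem_insert_self _ _)
    have hφside : ∀ x ∈ (↑Fr' : Set V), (x ∈ Γ.left ↔ φ x ∈ Γ.left) := by
      intro x hx
      rcases hclass x hx with hxeq | hx' | hx'
      · rw [hxeq, hφv]
        exact iff_of_false ((Γ.mem_right_iff v_r).1 hv_r) ((Γ.mem_right_iff w).1 hwr)
      · rw [hφBL x hx']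
        exact iff_of_true (hBLleft x hx') (hvLmem _ (hBLmem k x hx'))
      · rw [hφBR x hx']
        exact iff_of_false ((Γ.mem_right_iff x).1 (hBRright x hx'))
          ((Γ.mem_right_iff _).1 (hmemR _ (hBRmem k x hx')))
    have hφH : ∀ x ∈ (↑Fr' : Set V), φ x ∈ (↑H : Set V) := by
      intro x hx
      rcases hclass x hx with hxeq | hx' | hx'
      · rw [hxeq, hφv]; exact hw.1
      · rw [hφBL x hx']; exact Finset.mem_coe.2 (hvLH _ (hBLmem k x hx'))
      · rw [hφBR x hx']; exact Finset.mem_coe.2 (hvRH _ (hBRmem k x hx'))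
    have hφinj : Set.InjOn φ (↑Fr' : Set V) := by
      intro x hx y hy hxy
      rcases hclass x hx with hxeq | hx' | hx' <;> rcases hclass y hy with hyeq | hy' | hy'
      · rw [hxeq, hyeq]
      · rw [hxeq, hφv, hφBL y hy'] at hxy
        exact absurd hxy.symm (Γ.left_ne_right (hvLmem _ (hBLmem k y hy')) hwr)
      · rw [hxeq, hφv, hφBR y hy', ← hvtR] at hxy
        exact absurd (hvRinj (Finset.mem_coe.2 htR)
          (Finset.mem_coe.2 (hBRmem k y hy')) hxy).symm (BipartiteGraph.ne_pivotR tR y)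
      · rw [hyeq, hφv, hφBL x hx'] at hxy
        exact absurd hxy (Γ.left_ne_right (hvLmem _ (hBLmem k x hx')) hwr)
      · rw [hφBL x hx', hφBL y hy'] at hxy
        have := hvLinj (Finset.mem_coe.2 (hBLmem k x hx'))
          (Finset.mem_coe.2 (hBLmem k y hy')) hxy
        exact (Prod.mk.injEq _ _ _ _ ▸ Sum.inl.inj (Sum.inr.inj this)).2
      · rw [hφBL x hx', hφBR y hy'] at hxy
        exact absurd hxy (Γ.left_ne_right (hvLmem _ (hBLmem k x hx'))
          (hmemR _ (hBRmem k y hy')))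
      · rw [hyeq, hφBR x hx', hφv] at hxy
        exact absurd (hvRinj (Finset.mem_coe.2 (hBRmem k x hx'))
          (Finset.mem_coe.2 htR) (hxy.trans hvtR.symm)) (BipartiteGraph.ne_pivotR tR x)
      · rw [hφBR x hx', hφBL y hy'] at hxy
        exact absurd hxy.symm (Γ.left_ne_right (hvLmem _ (hBLmem k y hy'))
          (hmemR _ (hBRmem k x hx')))
      · rw [hφBR x hx', hφBR y hy'] at hxy
        have := hvRinj (Finset.mem_coe.2 (hBRmem k x hx'))
          (Finset.mem_coe.2 (hBRmem k y hy')) hxy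
        exact (Prod.mk.injEq _ _ _ _ ▸ Sum.inl.inj (Sum.inr.inj this)).2
    have hφiso : ∀ a ∈ (↑Fr' : Set V), ∀ b ∈ (↑Fr' : Set V), a ∈ Γ.left → b ∈ Γ.right →
        (Γ.adj a b ↔ Γ.adj (φ a) (φ b)) := by
      intro a ha b hb hal hbr
      have haBL : a ∈ BL := by
        rcases hclass a ha with haeq | ha' | ha'
        · rw [haeq] at hal
          exact absurd hal ((Γ.mem_right_iff v_r).1 hv_r)
        · exact ha'
        · exact absurd hal ((Γ.mem_right_iff a).1 (hBRright a ha'))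
      rw [hφBL a haBL]
      rcases hclass b hb with hbeq | hbBL | hbBR
      · rw [hbeq, hφv, ← hvtR, hq_eval tR htR _ (hBLmem k a haBL), hkdef]
        exact (BipartiteGraph.specH_pivotR v_l v_r tR a).symm
      · exact absurd (hBLleft b hbBL) ((Γ.mem_right_iff b).1 hbr)
      · rw [hφBR b hbBR, hq_eval _ (hBRmem k b hbBR) _ (hBLmem k a haBL)]
        exact (BipartiteGraph.specH_BB v_l v_r k a b).symm
    obtain ⟨α, hαaut, hα⟩ := BipartiteGraph.extend_partialIso hΓ (↑Fr' : Set V)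
      (Fr'.finite_toSet) φ hφside hφinj hφiso
    apply hF_r hiX (g * α) (mul_mem hgG (hAut α (Γ.inAutStar_of_aut hαaut)))
    have hsetD : (↑F_r ∪ {v_r} : Set V) = (↑Fr' : Set V) := by
      rw [hFr'def]
      ext x
      simp [or_comm]
    intro a ha b hb
    rw [hsetD] at ha hb
    obtain ⟨haD, hal⟩ := ha
    obtain ⟨hbD, hbr⟩ := hb
    have e1 : (⇑(g * α)) a = g (φ a) := by rw [Equiv.Perm.mul_apply, hα a haD]
    have e2 : (⇑(g * α)) b = g (φ b) := by rw [Equiv.Perm.mul_apply, hα b hbD]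
    rw [e1, e2]
    have hφar : φ b ∈ Γ.right := by
      rw [Γ.mem_right_iff] at hbr ⊢
      intro hc
      exact hbr ((hφside b hbD).2 hc)
    have h1 := hsw (φ a) ⟨hφH a haD, (hφside a haD).1 hal⟩ (φ b) ⟨hφH b hbD, hφar⟩
    have h2 : Γ.adj a b ↔ Γ.adj (φ a) (φ b) := hφiso a haD b hbD hal hbr
    have hab : a ≠ b := Γ.left_ne_right hal hbr
    have hφab : φ a ≠ φ b := Γ.left_ne_right ((hφside a haD).1 hal) hφar
    have hn1 : ((({φ a, φ b} : Set V) ∩ {w}).ncard ≠ 1) ↔ (w ≠ φ a ∧ w ≠ φ b) :=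
      BipartiteGraph.ncard_inter_singleton hφab
    have hn2 : ((({a, b} : Set V) ∩ {v_r}).ncard ≠ 1) ↔ (v_r ≠ a ∧ v_r ≠ b) :=
      BipartiteGraph.ncard_inter_singleton hab
    have hwa : w = φ a ↔ v_r = a := by
      constructor
      · intro h
        exact hφinj hvrD haD (by rw [hφv, h])
      · rintro rfl; exact hφv.symm
    have hwb : w = φ b ↔ v_r = b := by
      constructor
      · intro h
        exact hφinj hvrD hbD (by rw [hφv, h])
      · rintro rfl; exact hφv.symm
    rw [h2, h1, hn1, hn2]
    exact and_congr (not_congr hwa) (not_congr hwb)
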